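/- Let 1 ≤ p < ∞. There exists a constant C > 0 such that for every measurable function u : ℝ² → ℝ and every y₀ ∈ ℝ² one has ∫_{ℝ²} θ_{y₀}(x) |u(x)|ᵖ dx ≤ C · ∫_{ℝ²} θ_{y₀}(x₀) ( ∫_{ℝ²} θ_{x₀}(x) |u(x)|ᵖ dx ) dx₀, where C is independent of y₀ and u (the inequality is understood in [0,∞]). -/
import Mathlib

open MeasureTheory ENNReal

noncomputable def theta (x₀ x : EuclideanSpace ℝ (Fin 2)) : ℝ :=
  1 / (1 + ‖x - x₀‖ ^ 3)

abbrev E2 := EuclideanSpace ℝ (Fin 2)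

lemma theta_pos (x₀ x : E2) : 0 < theta x₀ x := by
  unfold theta
  positivity

lemma continuous_theta : Continuous (fun q : E2 × E2 => theta q.1 q.2) := by
  unfold theta
  apply Continuous.div continuous_const
  · fun_prop
  · intro q
    positivity

lemma theta_key (y₀ x x₀ : E2) (h : x₀ ∈ Metric.ball y₀ 1) :
    theta y₀ x / 10 ≤ theta y₀ x₀ * theta x₀ x := by
  have hd : ‖x₀ - y₀‖ < 1 := by
    simpa [dist_eq_norm] using h
  have hd0 : (0:ℝ) ≤ ‖x₀ - y₀‖ := norm_nonneg _
  have ht0 : (0:ℝ) ≤ ‖x - y₀‖ := norm_nonneg _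
  have hs0 : (0:ℝ) ≤ ‖x - x₀‖ := norm_nonneg _
  have hst : ‖x - x₀‖ ≤ ‖x - y₀‖ + 1 := by
    have := norm_sub_le_norm_sub_add_norm_sub x x₀ y₀
    -- ‖x - y₀‖ ≤ ‖x - x₀‖ + ‖x₀ - y₀‖ is the wrong direction; do triangle manually
    have h1 : ‖x - x₀‖ ≤ ‖x - y₀‖ + ‖y₀ - x₀‖ := norm_sub_le_norm_sub_add_norm_sub x y₀ x₀
    have h2 : ‖y₀ - x₀‖ = ‖x₀ - y₀‖ := norm_sub_rev _ _
    linarith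
  set t := ‖x - y₀‖
  set d := ‖x₀ - y₀‖
  set s := ‖x - x₀‖
  have hs3 : s ^ 3 ≤ (t + 1) ^ 3 := pow_le_pow_left₀ hs0 hst 3
  have key : (1 + d ^ 3) * (1 + s ^ 3) ≤ 10 * (1 + t ^ 3) := by
    have hd3 : d ^ 3 ≤ 1 := pow_le_one₀ hd0 hd.le
    have hstep : (1 + d ^ 3) * (1 + s ^ 3) ≤ 2 * (1 + s ^ 3) := by
      nlinarith [pow_nonneg hs0 3]
    have hcube : 6 * (t ^ 3 - t ^ 2 - t + 1) ≥ 0 := by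
      nlinarith [mul_nonneg (sq_nonneg (t - 1)) (by linarith : (0:ℝ) ≤ t + 1)]
    nlinarith [pow_nonneg ht0 3]
  unfold theta
  rw [div_mul_div_comm, one_mul, div_div, div_le_div_iff₀ (by positivity) (by positivity)]
  nlinarith [key]

noncomputable def vB : ℝ≥0∞ := volume (Metric.ball (0 : E2) 1)

lemma vB_pos : 0 < vB := Metric.measure_ball_pos _ _ one_pos

lemma vB_lt_top : vB < ⊤ := measure_ball_lt_top

lemma meas_theta_left (x : E2) :
    Measurable fun x₀ : E2 => ENNReal.ofReal (theta x₀ x) :=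
  ((continuous_theta.comp (continuous_id.prodMk continuous_const)).measurable).ennreal_ofReal

lemma meas_theta_right (x₀ : E2) :
    Measurable fun x : E2 => ENNReal.ofReal (theta x₀ x) :=
  ((continuous_theta.comp (continuous_const.prodMk continuous_id)).measurable).ennreal_ofReal

lemma conv_lower (y₀ x : E2) :
    ENNReal.ofReal (theta y₀ x) ≤
      (10 / vB) * ∫⁻ x₀, ENNReal.ofReal (theta y₀ x₀) * ENNReal.ofReal (theta x₀ x) := by
  set I := ∫⁻ x₀, ENNReal.ofReal (theta y₀ x₀) * ENNReal.ofReal (theta x₀ x) with hI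
  have hmeas : Measurable fun x₀ => ENNReal.ofReal (theta y₀ x₀) * ENNReal.ofReal (theta x₀ x) :=
    (meas_theta_right y₀).mul (meas_theta_left x)
  have h2 : ENNReal.ofReal (theta y₀ x / 10) * volume (Metric.ball y₀ 1) ≤ I := by
    calc ENNReal.ofReal (theta y₀ x / 10) * volume (Metric.ball y₀ 1)
        = ∫⁻ _ in Metric.ball y₀ 1, ENNReal.ofReal (theta y₀ x / 10) :=
          (setLIntegral_const _ _).symm
      _ ≤ ∫⁻ x₀ in Metric.ball y₀ 1,
            ENNReal.ofReal (theta y₀ x₀) * ENNReal.ofReal (theta x₀ x) := by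
          apply setLIntegral_mono hmeas
          intro x₀ hx₀
          rw [← ENNReal.ofReal_mul (theta_pos y₀ x₀).le]
          exact ENNReal.ofReal_le_ofReal (theta_key y₀ x x₀ hx₀)
      _ ≤ I := setLIntegral_le_lintegral _ _
  have hball : volume (Metric.ball y₀ 1) = vB := by
    simpa [vB] using Measure.addHaar_ball_center (volume : Measure E2) y₀ 1
  rw [hball] at h2
  have h3 : ENNReal.ofReal (theta y₀ x) = 10 * ENNReal.ofReal (theta y₀ x / 10) := by
    rw [← ENNReal.ofReal_ofNat, ← ENNReal.ofReal_mul (by norm_num)]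
    congr 1
    ring
  have h4 : ENNReal.ofReal (theta y₀ x) * vB ≤ 10 * I := by
    rw [h3, mul_assoc]
    exact mul_le_mul_right h2 10
  rw [div_eq_mul_inv, mul_assoc]
  rw [← ENNReal.le_div_iff_mul_le (Or.inl vB_pos.ne') (Or.inl vB_lt_top.ne)] at h4
  rwa [div_eq_mul_inv, mul_assoc, mul_comm I vB⁻¹] at h4

theorem weighted_norm_convolution_estimate (p : ℝ) (hp : 1 ≤ p) :
    ∃ C : ℝ, 0 < C ∧
      ∀ u : EuclideanSpace ℝ (Fin 2) → ℝ, Measurable u →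
      ∀ y₀ : EuclideanSpace ℝ (Fin 2),
        ∫⁻ x, ENNReal.ofReal (theta y₀ x) * ENNReal.ofReal (|u x| ^ p) ≤
          ENNReal.ofReal C *
            ∫⁻ x₀, ENNReal.ofReal (theta y₀ x₀) *
              ∫⁻ x, ENNReal.ofReal (theta x₀ x) * ENNReal.ofReal (|u x| ^ p) := by
  have c_ne_top : (10 / vB : ℝ≥0∞) ≠ ⊤ := (ENNReal.div_lt_top (by norm_num) vB_pos.ne').ne
  have c_ne_zero : (10 / vB : ℝ≥0∞) ≠ 0 := by
    simp [ENNReal.div_eq_zero_iff, vB_lt_top.ne]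
  refine ⟨(10 / vB : ℝ≥0∞).toReal, ENNReal.toReal_pos c_ne_zero c_ne_top, ?_⟩
  intro u hu y₀
  rw [ENNReal.ofReal_toReal c_ne_top]
  set g : E2 → ℝ≥0∞ := fun x => ENNReal.ofReal (|u x| ^ p) with hg
  have hgmeas : Measurable g := (hu.abs.pow_const p).ennreal_ofReal
  have m1 : Measurable fun z : E2 × E2 => ENNReal.ofReal (theta y₀ z.2) :=
    (meas_theta_right y₀).comp measurable_snd
  have m2 : Measurable fun z : E2 × E2 => ENNReal.ofReal (theta z.2 z.1) :=
    (continuous_theta.comp (continuous_snd.prodMk continuous_fst)).measurable.ennreal_ofReal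
  have m3 : Measurable fun z : E2 × E2 => g z.1 := hgmeas.comp measurable_fst
  calc ∫⁻ x, ENNReal.ofReal (theta y₀ x) * g x
      ≤ ∫⁻ x, ((10 / vB) *
          ∫⁻ x₀, ENNReal.ofReal (theta y₀ x₀) * ENNReal.ofReal (theta x₀ x)) * g x :=
        lintegral_mono fun x => mul_le_mul_left (conv_lower y₀ x) (g x)
    _ = (10 / vB) * ∫⁻ x,
          (∫⁻ x₀, ENNReal.ofReal (theta y₀ x₀) * ENNReal.ofReal (theta x₀ x)) * g x := by
        simp_rw [mul_assoc]
        exact lintegral_const_mul' _ _ c_ne_top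
    _ = (10 / vB) * ∫⁻ x, ∫⁻ x₀,
          ENNReal.ofReal (theta y₀ x₀) * ENNReal.ofReal (theta x₀ x) * g x := by
        congr 1
        refine lintegral_congr fun x => ?_
        exact (lintegral_mul_const' (g x) _ ENNReal.ofReal_ne_top).symm
    _ = (10 / vB) * ∫⁻ x₀, ∫⁻ x,
          ENNReal.ofReal (theta y₀ x₀) * ENNReal.ofReal (theta x₀ x) * g x := by
        congr 1
        exact lintegral_lintegral_swap ((m1.mul m2).mul m3).aemeasurable
    _ = (10 / vB) * ∫⁻ x₀, ENNReal.ofReal (theta y₀ x₀) *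
          ∫⁻ x, ENNReal.ofReal (theta x₀ x) * g x := by
        congr 1
        refine lintegral_congr fun x₀ => ?_
        simp_rw [mul_assoc]
        exact lintegral_const_mul' _ _ ENNReal.ofReal_ne_top
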